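/- Under the assumptions of the previous statement (f_n continuous, f_n(λ,0)=0, differentiable in the second variable with jointly continuous derivative, and the families {f_n}, {D₂f_n} equicontinuous with {D₂f_n} pointwise bounded on Λ × D(0,r₀) for some r₀ > 0), the Nemitski operator 𝒩_f : Λ × ℓ_0(ℝ^d) → ℓ_0(ℝ^d) is continuous and, for each fixed λ, Fréchet differentiable in the second variable with derivative (D₂𝒩_f(λ,φ)ψ)(n) = D₂f_n(λ,φ(n))ψ(n); moreover (λ,φ) ↦ D₂𝒩_f(λ,φ) is continuous into L(ℓ_0(ℝ^d)). -/

import Mathlib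

open ZeroAtInfty Filter Metric Topology

namespace Stmt12Aux

variable {d : ℕ}

local notation "E" => EuclideanSpace ℝ (Fin d)

lemma norm_apply_le (φ : C₀(ℤ, E)) (n : ℤ) : ‖φ n‖ ≤ ‖φ‖ := by
  rw [← ZeroAtInftyContinuousMap.norm_toBCF_eq_norm]
  exact φ.toBCF.norm_coe_le_norm n

lemma dist_apply_le (φ ψ : C₀(ℤ, E)) (n : ℤ) : dist (φ n) (ψ n) ≤ dist φ ψ := by
  exact BoundedContinuousFunction.dist_coe_le_dist (f := φ.toBCF) (g := ψ.toBCF) n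

lemma norm_le_c0 {φ : C₀(ℤ, E)} {C : ℝ} (hC : 0 ≤ C) (h : ∀ n, ‖φ n‖ ≤ C) : ‖φ‖ ≤ C := by
  rw [← ZeroAtInftyContinuousMap.norm_toBCF_eq_norm]
  exact (BoundedContinuousFunction.norm_le hC).mpr h

lemma dist_le_c0 {φ ψ : C₀(ℤ, E)} {C : ℝ} (hC : 0 ≤ C) (h : ∀ n, dist (φ n) (ψ n) ≤ C) :
    dist φ ψ ≤ C := by
  rw [← ZeroAtInftyContinuousMap.dist_toBCF_eq_dist (f := φ) (g := ψ)]
  exact (BoundedContinuousFunction.dist_le hC).mpr h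

lemma finite_big (φ : C₀(ℤ, E)) {c : ℝ} (hc : 0 < c) : {n : ℤ | c ≤ ‖φ n‖}.Finite := by
  have h := ZeroAtInftyContinuousMapClass.zero_at_infty (F := C₀(ℤ, E)) φ
  rw [Filter.cocompact_eq_cofinite] at h
  have h2 := (Metric.tendsto_nhds.mp h) c hc
  rw [Filter.eventually_cofinite] at h2
  refine h2.subset fun n hn => ?_
  simp only [Set.mem_setOf_eq, dist_zero_right, not_lt] at *
  exact hn

noncomputable def mk0 (g : ℤ → E) (h : Tendsto g cofinite (𝓝 0)) : C₀(ℤ, E) :=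
  ⟨⟨g, continuous_of_discreteTopology⟩, by rwa [Filter.cocompact_eq_cofinite]⟩

@[simp] lemma mk0_apply (g : ℤ → E) (h : Tendsto g cofinite (𝓝 0)) (n : ℤ) :
    mk0 g h n = g n := rfl

lemma exists_bound {α : Type*} (s : Finset α) (g : α → ℝ) :
    ∃ B, 0 ≤ B ∧ ∀ a ∈ s, g a ≤ B := by
  classical
  induction s using Finset.induction with
  | empty => exact ⟨0, le_refl _, by simp⟩
  | @insert a s _ ih =>
    obtain ⟨B, hB0, hB⟩ := ih
    refine ⟨max B (g a), le_trans hB0 (le_max_left _ _), fun b hb => ?_⟩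
    rcases Finset.mem_insert.mp hb with h | h
    · subst h; exact le_max_right _ _
    · exact le_trans (hB b h) (le_max_left _ _)

noncomputable def subOp (A : ℤ → (E →L[ℝ] E))
    (hz : ∀ ψ : C₀(ℤ, E), Tendsto (fun n => A n (ψ n)) cofinite (𝓝 0))
    (C : ℝ) (hC0 : 0 ≤ C) (hC : ∀ n, ‖A n‖ ≤ C) : C₀(ℤ, E) →L[ℝ] C₀(ℤ, E) :=
  LinearMap.mkContinuous
    { toFun := fun ψ => mk0 (fun n => A n (ψ n)) (hz ψ)
      map_add' := fun ψ₁ ψ₂ => by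
        ext n
        simp [ZeroAtInftyContinuousMap.add_apply]
      map_smul' := fun c ψ => by
        ext n
        simp [ZeroAtInftyContinuousMap.smul_apply] }
    C
    (fun ψ => by
      refine norm_le_c0 (mul_nonneg hC0 (norm_nonneg _)) fun n => ?_
      refine le_trans ((A n).le_opNorm (ψ n)) ?_
      exact mul_le_mul (hC n) (norm_apply_le ψ n) (norm_nonneg _) hC0)

@[simp] lemma subOp_apply (A : ℤ → (E →L[ℝ] E)) (hz) (C : ℝ) (hC0) (hC)
    (ψ : C₀(ℤ, E)) (n : ℤ) : subOp A hz C hC0 hC ψ n = A n (ψ n) := rfl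

lemma dist_fst_le {α β : Type*} [PseudoMetricSpace α] [PseudoMetricSpace β] (p q : α × β) :
    dist p.1 q.1 ≤ dist p q := by
  rw [Prod.dist_eq]; exact le_max_left _ _

lemma dist_snd_le {α β : Type*} [PseudoMetricSpace α] [PseudoMetricSpace β] (p q : α × β) :
    dist p.2 q.2 ≤ dist p q := by
  rw [Prod.dist_eq]; exact le_max_right _ _

lemma continuous_eval (n : ℤ) : Continuous fun φ : C₀(ℤ, E) => φ n := by
  rw [Metric.continuous_iff]
  exact fun φ ε hε => ⟨ε, hε, fun ψ h => lt_of_le_of_lt (dist_apply_le ψ φ n) h⟩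

end Stmt12Aux

set_option maxHeartbeats 1000000 in
set_option synthInstance.maxHeartbeats 1000000 in
/-- the Nemitski operator `𝒩_f : Λ × ℓ_0(ℝ^d) → ℓ_0(ℝ^d)` is continuous,
Fréchet differentiable in the second variable with derivative the substitution operator
by `D₂f_n(λ, φ(n))`, and this derivative depends continuously on `(λ, φ)`. -/
theorem stmt_12 {d : ℕ} {Λ : Type*} [MetricSpace Λ] [CompactSpace Λ]
    (f : ℤ → Λ → EuclideanSpace ℝ (Fin d) → EuclideanSpace ℝ (Fin d))
    (hfc : ∀ n, Continuous fun p : Λ × EuclideanSpace ℝ (Fin d) => f n p.1 p.2)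
    (hf0 : ∀ n l, f n l 0 = 0)
    (Df : ℤ → Λ → EuclideanSpace ℝ (Fin d) →
      (EuclideanSpace ℝ (Fin d) →L[ℝ] EuclideanSpace ℝ (Fin d)))
    (hDf : ∀ n l x, HasFDerivAt (f n l) (Df n l x) x)
    (hDfc : ∀ n, Continuous fun p : Λ × EuclideanSpace ℝ (Fin d) => Df n p.1 p.2)
    (r₀ : ℝ) (hr₀ : 0 < r₀)
    (hequif : ∀ ε > (0 : ℝ), ∃ δ > (0 : ℝ), ∀ (n : ℤ) (l₁ l₂ : Λ)
      (x₁ x₂ : EuclideanSpace ℝ (Fin d)), ‖x₁‖ ≤ r₀ → ‖x₂‖ ≤ r₀ →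
      dist l₁ l₂ < δ → dist x₁ x₂ < δ → dist (f n l₁ x₁) (f n l₂ x₂) < ε)
    (hequiD : ∀ ε > (0 : ℝ), ∃ δ > (0 : ℝ), ∀ (n : ℤ) (l₁ l₂ : Λ)
      (x₁ x₂ : EuclideanSpace ℝ (Fin d)), ‖x₁‖ ≤ r₀ → ‖x₂‖ ≤ r₀ →
      dist l₁ l₂ < δ → dist x₁ x₂ < δ → dist (Df n l₁ x₁) (Df n l₂ x₂) < ε)
    (hptbdd : ∀ (l : Λ) (x : EuclideanSpace ℝ (Fin d)), ‖x‖ ≤ r₀ →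
      ∃ C, ∀ n, ‖Df n l x‖ ≤ C) :
    ∃ N : Λ × C₀(ℤ, EuclideanSpace ℝ (Fin d)) → C₀(ℤ, EuclideanSpace ℝ (Fin d)),
      (∀ l φ (n : ℤ), N (l, φ) n = f n l (φ n)) ∧
      Continuous N ∧
      ∃ DN : Λ × C₀(ℤ, EuclideanSpace ℝ (Fin d)) →
          (C₀(ℤ, EuclideanSpace ℝ (Fin d)) →L[ℝ] C₀(ℤ, EuclideanSpace ℝ (Fin d))),
        (∀ l φ ψ (n : ℤ), DN (l, φ) ψ n = Df n l (φ n) (ψ n)) ∧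
        (∀ l φ, HasFDerivAt (fun ψ => N (l, ψ)) (DN (l, φ)) φ) ∧
        Continuous DN := by
  classical
  -- uniform bound on the derivatives over the ball of radius r₀
  obtain ⟨M, hM⟩ : ∃ M : ℝ, ∀ (n : ℤ) (l : Λ) (x : EuclideanSpace ℝ (Fin d)),
      ‖x‖ ≤ r₀ → ‖Df n l x‖ ≤ M := by
    obtain ⟨δ, hδ, hδ'⟩ := hequiD 1 one_pos
    have hK : IsCompact ((Set.univ : Set Λ) ×ˢ Metric.closedBall (0 : EuclideanSpace ℝ (Fin d)) r₀) :=
      isCompact_univ.prod (isCompact_closedBall _ _)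
    obtain ⟨t, htK, htc⟩ := hK.elim_nhds_subcover (fun p => Metric.ball p δ)
      (fun p _ => Metric.ball_mem_nhds p hδ)
    set C : Λ × EuclideanSpace ℝ (Fin d) → ℝ := fun p =>
      if h : ‖p.2‖ ≤ r₀ then (hptbdd p.1 p.2 h).choose else 0 with hC
    obtain ⟨B, hB0, hB⟩ := Stmt12Aux.exists_bound t C
    refine ⟨B + 1, fun n l x hx => ?_⟩
    have hmem : (l, x) ∈ (Set.univ : Set Λ) ×ˢ Metric.closedBall (0 : EuclideanSpace ℝ (Fin d)) r₀ :=
      ⟨Set.mem_univ _, by simpa [Metric.mem_closedBall, dist_zero_right] using hx⟩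
    obtain ⟨p, hpt, hpx⟩ := Set.mem_iUnion₂.mp (htc hmem)
    have hp2 : ‖p.2‖ ≤ r₀ := by
      have := (htK p hpt).2
      simpa [Metric.mem_closedBall, dist_zero_right] using this
    have hd1 : dist l p.1 < δ :=
      lt_of_le_of_lt (Stmt12Aux.dist_fst_le ((l, x) : Λ × EuclideanSpace ℝ (Fin d)) p) hpx
    have hd2 : dist x p.2 < δ :=
      lt_of_le_of_lt (Stmt12Aux.dist_snd_le ((l, x) : Λ × EuclideanSpace ℝ (Fin d)) p) hpx
    have h1 : dist (Df n l x) (Df n p.1 p.2) < 1 := hδ' n l p.1 x p.2 hx hp2 hd1 hd2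
    have h2 : ‖Df n p.1 p.2‖ ≤ C p := by
      rw [hC]; simp only [dif_pos hp2]
      exact (hptbdd p.1 p.2 hp2).choose_spec n
    calc ‖Df n l x‖ ≤ ‖Df n p.1 p.2‖ + dist (Df n l x) (Df n p.1 p.2) := by
            rw [dist_eq_norm]
            exact (norm_le_insert' _ _).trans (by rw [add_comm])
      _ ≤ C p + 1 := add_le_add h2 h1.le
      _ ≤ B + 1 := add_le_add (hB p hpt) le_rfl
  -- N is valued in C₀
  have hNz : ∀ (l : Λ) (φ : C₀(ℤ, EuclideanSpace ℝ (Fin d))),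
      Tendsto (fun n => f n l (φ n)) cofinite (𝓝 0) := by
    intro l φ
    rw [Metric.tendsto_nhds]
    intro ε hε
    obtain ⟨δ, hδ, hδ'⟩ := hequif ε hε
    rw [Filter.eventually_cofinite]
    refine (Stmt12Aux.finite_big φ (lt_min hδ hr₀)).subset fun n hn => ?_
    simp only [Set.mem_setOf_eq, not_lt] at hn ⊢
    by_contra hcon
    push_neg at hcon
    have h1 : ‖φ n‖ ≤ r₀ := (hcon.trans_le (min_le_right _ _)).le
    have h2 : dist (φ n) (0 : EuclideanSpace ℝ (Fin d)) < δ := by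
      rw [dist_zero_right]; exact hcon.trans_le (min_le_left _ _)
    have hlt := hδ' n l l (φ n) 0 h1 (by simp [hr₀.le]) (by simpa using hδ) h2
    rw [hf0 n l] at hlt
    exact absurd hn (not_le.mpr hlt)
  set N : Λ × C₀(ℤ, EuclideanSpace ℝ (Fin d)) → C₀(ℤ, EuclideanSpace ℝ (Fin d)) :=
    fun p => Stmt12Aux.mk0 (fun n => f n p.1 (p.2 n)) (hNz p.1 p.2) with hN
  -- bound of Df along a C₀ function
  have hDbd : ∀ (l : Λ) (φ : C₀(ℤ, EuclideanSpace ℝ (Fin d))),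
      ∃ C, 0 ≤ C ∧ ∀ n, ‖Df n l (φ n)‖ ≤ C := by
    intro l φ
    obtain ⟨B, hB0, hB⟩ := Stmt12Aux.exists_bound (Stmt12Aux.finite_big φ hr₀).toFinset
      (fun n => ‖Df n l (φ n)‖)
    refine ⟨max M B, le_trans hB0 (le_max_right _ _), fun n => ?_⟩
    by_cases hn : r₀ ≤ ‖φ n‖
    · exact le_trans (hB n (by simpa using hn)) (le_max_right _ _)
    · exact le_trans (hM n l (φ n) (not_le.mp hn).le) (le_max_left _ _)
  have hDz : ∀ (l : Λ) (φ ψ : C₀(ℤ, EuclideanSpace ℝ (Fin d))),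
      Tendsto (fun n => Df n l (φ n) (ψ n)) cofinite (𝓝 0) := by
    intro l φ ψ
    obtain ⟨C, hC0, hC⟩ := hDbd l φ
    have h1 : Tendsto (fun n => ψ n) cofinite (𝓝 (0 : EuclideanSpace ℝ (Fin d))) := by
      rw [← Filter.cocompact_eq_cofinite]
      exact ZeroAtInftyContinuousMapClass.zero_at_infty ψ
    have h2 : Tendsto (fun n => C * ‖ψ n‖) cofinite (𝓝 0) := by
      have := (h1.norm).const_mul C
      simpa using this
    refine squeeze_zero_norm (fun n => ?_) h2
    exact le_trans ((Df n l (φ n)).le_opNorm (ψ n))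
      (mul_le_mul_of_nonneg_right (hC n) (norm_nonneg _))
  set DNf : Λ × C₀(ℤ, EuclideanSpace ℝ (Fin d)) →
      (C₀(ℤ, EuclideanSpace ℝ (Fin d)) →L[ℝ] C₀(ℤ, EuclideanSpace ℝ (Fin d))) := fun p =>
    Stmt12Aux.subOp (fun n => Df n p.1 (p.2 n)) (hDz p.1 p.2)
      (hDbd p.1 p.2).choose (hDbd p.1 p.2).choose_spec.1
      (fun n => (hDbd p.1 p.2).choose_spec.2 n) with hDN
  have hDNapp : ∀ l φ ψ (n : ℤ), DNf (l, φ) ψ n = Df n l (φ n) (ψ n) := fun l φ ψ n => rfl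
  -- differentiability
  have hderiv : ∀ l φ, HasFDerivAt (fun ψ => N (l, ψ)) (DNf (l, φ)) φ := by
    intro l φ
    rw [hasFDerivAt_iff_isLittleO_nhds_zero, Asymptotics.isLittleO_iff]
    intro c hc
    obtain ⟨δ₁, hδ₁, hδ₁'⟩ := hequiD c hc
    have hfin := Stmt12Aux.finite_big φ (by positivity : (0:ℝ) < r₀ / 2)
    have keyS : ∀ n ∈ hfin.toFinset, ∀ᶠ (h : C₀(ℤ, EuclideanSpace ℝ (Fin d))) in 𝓝 0,
        ∀ y : EuclideanSpace ℝ (Fin d), dist y (φ n) ≤ ‖h‖ → ‖Df n l y - Df n l (φ n)‖ ≤ c := by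
      intro n _
      have hc' : ContinuousAt (fun x : EuclideanSpace ℝ (Fin d) => Df n l x) (φ n) :=
        ((hDfc n).comp (continuous_const.prodMk continuous_id)).continuousAt
      rw [Metric.continuousAt_iff] at hc'
      obtain ⟨δₙ, hδₙ, hδₙ'⟩ := hc' c hc
      have hev : ∀ᶠ (h : C₀(ℤ, EuclideanSpace ℝ (Fin d))) in 𝓝 0, ‖h‖ < δₙ := by
        filter_upwards [Metric.ball_mem_nhds (0 : C₀(ℤ, EuclideanSpace ℝ (Fin d))) hδₙ] with h hh
        rw [mem_ball, dist_zero_right] at hh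
        exact hh
      filter_upwards [hev] with h hh y hy
      have := hδₙ' (show dist y (φ n) < δₙ from lt_of_le_of_lt hy hh)
      rw [dist_eq_norm] at this
      exact this.le
    have keysmall : ∀ᶠ (h : C₀(ℤ, EuclideanSpace ℝ (Fin d))) in 𝓝 0, ‖h‖ < min δ₁ (r₀ / 2) := by
      filter_upwards [Metric.ball_mem_nhds (0 : C₀(ℤ, EuclideanSpace ℝ (Fin d)))
        (lt_min hδ₁ (show (0:ℝ) < r₀ / 2 by positivity))] with h hh
      rw [mem_ball, dist_zero_right] at hh
      exact hh
    filter_upwards [keysmall, (Filter.eventually_all_finset hfin.toFinset).mpr keyS] with h hsmall hS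
    refine Stmt12Aux.norm_le_c0 (by positivity) fun n => ?_
    have hsub : (N (l, φ + h) - N (l, φ) - DNf (l, φ) h) n
        = f n l (φ n + h n) - f n l (φ n) - Df n l (φ n) (h n) := by
      rfl
    rw [hsub]
    have hbound : ∀ y ∈ Metric.closedBall (φ n) ‖h‖, ‖Df n l y - Df n l (φ n)‖ ≤ c := by
      intro y hy
      rw [Metric.mem_closedBall] at hy
      by_cases hn : n ∈ hfin.toFinset
      · exact hS n hn y hy
      · have h1 : ‖φ n‖ < r₀ / 2 := by
          simp only [Set.Finite.mem_toFinset, Set.mem_setOf_eq, not_le] at hn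
          exact hn
        have h2 : ‖y‖ ≤ r₀ := by
          have : ‖y - φ n‖ ≤ ‖h‖ := by rwa [← dist_eq_norm]
          calc ‖y‖ = ‖y - φ n + φ n‖ := by rw [sub_add_cancel]
            _ ≤ ‖y - φ n‖ + ‖φ n‖ := norm_add_le _ _
            _ ≤ ‖h‖ + ‖φ n‖ := add_le_add this le_rfl
            _ ≤ r₀ / 2 + r₀ / 2 :=
              add_le_add (hsmall.trans_le (min_le_right _ _)).le h1.le
            _ = r₀ := by ring
        have h3 : dist y (φ n) < δ₁ := lt_of_le_of_lt hy (hsmall.trans_le (min_le_left _ _))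
        have := hδ₁' n l l y (φ n) h2
          (h1.le.trans (by linarith)) (by simpa using hδ₁) h3
        rw [dist_eq_norm] at this
        exact this.le
    have hmem1 : φ n ∈ Metric.closedBall (φ n) ‖h‖ :=
      Metric.mem_closedBall_self (norm_nonneg _)
    have hmem2 : φ n + h n ∈ Metric.closedBall (φ n) ‖h‖ := by
      rw [Metric.mem_closedBall, dist_eq_norm, add_sub_cancel_left]
      exact Stmt12Aux.norm_apply_le h n
    have := (convex_closedBall (φ n) ‖h‖).norm_image_sub_le_of_norm_hasFDerivWithin_le'
      (f' := fun y => Df n l y) (φ := Df n l (φ n))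
      (fun y _ => (hDf n l y).hasFDerivWithinAt) hbound hmem1 hmem2
    rw [add_sub_cancel_left] at this
    exact this.trans (mul_le_mul_of_nonneg_left (Stmt12Aux.norm_apply_le h n) hc.le)
  -- continuity of N
  have hNcont : Continuous N := by
    refine continuous_iff_continuousAt.mpr fun p₀ => Metric.tendsto_nhds.mpr fun ε hε => ?_
    obtain ⟨δ₁, hδ₁, hδ₁'⟩ := hequif (ε / 2) (by positivity)
    have hfin := Stmt12Aux.finite_big p₀.2 (by positivity : (0:ℝ) < r₀ / 2)
    have keyS : ∀ n ∈ hfin.toFinset, ∀ᶠ p in 𝓝 p₀,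
        dist (f n p.1 (p.2 n)) (f n p₀.1 (p₀.2 n)) < ε / 2 := by
      intro n _
      have hcont : Continuous fun p : Λ × C₀(ℤ, EuclideanSpace ℝ (Fin d)) => f n p.1 (p.2 n) :=
        (hfc n).comp (continuous_fst.prodMk ((Stmt12Aux.continuous_eval n).comp continuous_snd))
      exact Metric.tendsto_nhds.mp hcont.continuousAt (ε / 2) (by positivity)
    have keysmall : ∀ᶠ p in 𝓝 p₀, dist p p₀ < min δ₁ (r₀ / 2) := by
      filter_upwards [Metric.ball_mem_nhds p₀ (lt_min hδ₁ (show (0:ℝ) < r₀ / 2 by positivity))] with p hp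
      rwa [mem_ball] at hp
    filter_upwards [keysmall, (Filter.eventually_all_finset hfin.toFinset).mpr keyS] with p hsmall hS
    have hfst : dist p.1 p₀.1 < min δ₁ (r₀ / 2) :=
      lt_of_le_of_lt (Stmt12Aux.dist_fst_le p p₀) hsmall
    have hsnd : dist p.2 p₀.2 < min δ₁ (r₀ / 2) :=
      lt_of_le_of_lt (Stmt12Aux.dist_snd_le p p₀) hsmall
    have hle : dist (N p) (N p₀) ≤ ε / 2 := by
      refine Stmt12Aux.dist_le_c0 (by positivity) fun n => ?_
      by_cases hn : n ∈ hfin.toFinset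
      · exact (hS n hn).le
      · have h1 : ‖p₀.2 n‖ < r₀ / 2 := by
          simp only [Set.Finite.mem_toFinset, Set.mem_setOf_eq, not_le] at hn
          exact hn
        have hdn : dist (p.2 n) (p₀.2 n) < min δ₁ (r₀ / 2) :=
          lt_of_le_of_lt (Stmt12Aux.dist_apply_le p.2 p₀.2 n) hsnd
        have h2 : ‖p.2 n‖ ≤ r₀ := by
          calc ‖p.2 n‖ = ‖p.2 n - p₀.2 n + p₀.2 n‖ := by rw [sub_add_cancel]
            _ ≤ ‖p.2 n - p₀.2 n‖ + ‖p₀.2 n‖ := norm_add_le _ _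
            _ = dist (p.2 n) (p₀.2 n) + ‖p₀.2 n‖ := by rw [dist_eq_norm]
            _ ≤ r₀ / 2 + r₀ / 2 := add_le_add (hdn.trans_le (min_le_right _ _)).le h1.le
            _ = r₀ := by ring
        exact (hδ₁' n p.1 p₀.1 (p.2 n) (p₀.2 n) h2 (h1.le.trans (by linarith))
          (hfst.trans_le (min_le_left _ _)) (hdn.trans_le (min_le_left _ _))).le
    linarith
  -- continuity of DN
  have hDNcont' : ∀ p₀ : Λ × C₀(ℤ, EuclideanSpace ℝ (Fin d)),
      Tendsto DNf (𝓝 p₀) (𝓝 (DNf p₀)) := by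
    intro p₀
    apply (Metric.tendsto_nhds (α := C₀(ℤ, EuclideanSpace ℝ (Fin d)) →L[ℝ]
      C₀(ℤ, EuclideanSpace ℝ (Fin d)))).mpr
    intro ε hε
    obtain ⟨δ₁, hδ₁, hδ₁'⟩ := hequiD (ε / 2) (by positivity)
    have hfin := Stmt12Aux.finite_big p₀.2 (by positivity : (0:ℝ) < r₀ / 2)
    have keyS : ∀ n ∈ hfin.toFinset, ∀ᶠ p in 𝓝 p₀,
        dist (Df n p.1 (p.2 n)) (Df n p₀.1 (p₀.2 n)) < ε / 2 := by
      intro n _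
      have hcont : Continuous fun p : Λ × C₀(ℤ, EuclideanSpace ℝ (Fin d)) => Df n p.1 (p.2 n) :=
        (hDfc n).comp (continuous_fst.prodMk ((Stmt12Aux.continuous_eval n).comp continuous_snd))
      exact Metric.tendsto_nhds.mp hcont.continuousAt (ε / 2) (by positivity)
    have keysmall : ∀ᶠ p in 𝓝 p₀, dist p p₀ < min δ₁ (r₀ / 2) := by
      filter_upwards [Metric.ball_mem_nhds p₀ (lt_min hδ₁ (show (0:ℝ) < r₀ / 2 by positivity))] with p hp
      rwa [mem_ball] at hp
    filter_upwards [keysmall, (Filter.eventually_all_finset hfin.toFinset).mpr keyS] with p hsmall hS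
    have hfst : dist p.1 p₀.1 < min δ₁ (r₀ / 2) :=
      lt_of_le_of_lt (Stmt12Aux.dist_fst_le p p₀) hsmall
    have hsnd : dist p.2 p₀.2 < min δ₁ (r₀ / 2) :=
      lt_of_le_of_lt (Stmt12Aux.dist_snd_le p p₀) hsmall
    have hopd : ∀ n : ℤ, ‖Df n p.1 (p.2 n) - Df n p₀.1 (p₀.2 n)‖ ≤ ε / 2 := by
      intro n
      by_cases hn : n ∈ hfin.toFinset
      · have := hS n hn
        rw [dist_eq_norm] at this
        exact this.le
      · have h1 : ‖p₀.2 n‖ < r₀ / 2 := by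
          simp only [Set.Finite.mem_toFinset, Set.mem_setOf_eq, not_le] at hn
          exact hn
        have hdn : dist (p.2 n) (p₀.2 n) < min δ₁ (r₀ / 2) :=
          lt_of_le_of_lt (Stmt12Aux.dist_apply_le p.2 p₀.2 n) hsnd
        have h2 : ‖p.2 n‖ ≤ r₀ := by
          calc ‖p.2 n‖ = ‖p.2 n - p₀.2 n + p₀.2 n‖ := by rw [sub_add_cancel]
            _ ≤ ‖p.2 n - p₀.2 n‖ + ‖p₀.2 n‖ := norm_add_le _ _
            _ = dist (p.2 n) (p₀.2 n) + ‖p₀.2 n‖ := by rw [dist_eq_norm]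
            _ ≤ r₀ / 2 + r₀ / 2 := add_le_add (hdn.trans_le (min_le_right _ _)).le h1.le
            _ = r₀ := by ring
        have := hδ₁' n p.1 p₀.1 (p.2 n) (p₀.2 n) h2 (h1.le.trans (by linarith))
          (hfst.trans_le (min_le_left _ _)) (hdn.trans_le (min_le_left _ _))
        rw [dist_eq_norm] at this
        exact this.le
    have hnorm : ‖DNf p - DNf p₀‖ ≤ ε / 2 := by
      refine ContinuousLinearMap.opNorm_le_bound _ (by positivity) fun ψ => ?_
      refine Stmt12Aux.norm_le_c0 (by positivity) fun n => ?_
      have happly : ((DNf p - DNf p₀) ψ) n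
          = (Df n p.1 (p.2 n) - Df n p₀.1 (p₀.2 n)) (ψ n) := by
        rfl
      rw [happly]
      refine le_trans ((Df n p.1 (p.2 n) - Df n p₀.1 (p₀.2 n)).le_opNorm (ψ n)) ?_
      exact mul_le_mul (hopd n) (Stmt12Aux.norm_apply_le ψ n) (norm_nonneg _) (by positivity)
    have hle : dist (DNf p) (DNf p₀) ≤ ε / 2 :=
      le_trans (le_of_eq (by exact dist_eq_norm (DNf p) (DNf p₀))) hnorm
    linarith
  have hDNcont : Continuous DNf := continuous_iff_continuousAt.mpr hDNcont'
  exact ⟨N, fun l φ n => rfl, hNcont, DNf, hDNapp, hderiv, hDNcont⟩
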